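/- Let X, L, Y be nonempty finite types and let p be a probability mass function on X × L × Y × Y, with coordinates written (x, l, y, s) where the last coordinate is the sampling intention S taking values in the same type as the label Y. Assume: (i) P(Y=y | L=l) = P(Y=y) for all y and all l with P(L=l) > 0; and (ii) P(S=s | X=x, L=l, Y=y) = P(S=s | L=l) for all x, l, y, s with P(X=x, L=l, Y=y) > 0. Write {S=Y} for the event that the last two coordinates are equal. Then for all x, l, y with P(X=x, L=l, S=Y) > 0, P(L=l, S=Y) > 0, P(X=x, L=l) > 0, P(X=x, L=l, Y=y) > 0, P(L=l) > 0, and P(Y=y) > 0: P(Y=y | X=x, L=l, S=Y) = [P(Y=y | L=l, S=Y) · P(Y=y | X=x, L=l) / P(Y=y)] · κ(x,l), where κ(x,l) := P(X=x, L=l) · P(L=l, S=Y) / (P(X=x, L=l, S=Y) · P(L=l)) does not depend on y. In particular, as a function of y, P(Y=y | X=x, L=l, S=Y) is proportional to P(Y=y | L=l, S=Y) · P(Y=y | X=x, L=l) / P(Y=y). -/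

import Mathlib

/-- the leakage-neutral decomposition: pmf on `X × L × Y × Y`
with coordinates `(x, l, y, s)`. If (i) `P(Y=y | L=l) = P(Y=y)` whenever
`P(L=l) > 0` and (ii) `P(S=s | X=x, L=l, Y=y) = P(S=s | L=l)` whenever
`P(X=x, L=l, Y=y) > 0`, then under the stated positivity conditions
`P(Y=y | X=x, L=l, S=Y) = [P(Y=y | L=l, S=Y) · P(Y=y | X=x, L=l) / P(Y=y)] · κ(x,l)`
with `κ(x,l) := P(X=x,L=l) · P(L=l,S=Y) / (P(X=x,L=l,S=Y) · P(L=l))`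
independent of `y`; in particular, as a function of `y`,
`P(Y=y | X=x, L=l, S=Y) ∝ P(Y=y | L=l, S=Y) · P(Y=y | X=x, L=l) / P(Y=y)`. -/
theorem stmt_17 {X L Y : Type*} [Fintype X] [Fintype L] [Fintype Y]
    [Nonempty X] [Nonempty L] [Nonempty Y]
    (p : X × L × Y × Y → ℝ) (hp : ∀ z, 0 ≤ p z)
    (hsum : ∑ z : X × L × Y × Y, p z = 1)
    -- (i) the label is independent of L: P(Y=y | L=l) = P(Y=y)
    (hYL : ∀ (y : Y) (l : L),
      0 < (∑ x' : X, ∑ y' : Y, ∑ s' : Y, p (x', l, y', s')) →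
      (∑ x' : X, ∑ s' : Y, p (x', l, y, s')) /
          (∑ x' : X, ∑ y' : Y, ∑ s' : Y, p (x', l, y', s')) =
        ∑ x' : X, ∑ l' : L, ∑ s' : Y, p (x', l', y, s'))
    -- (ii) the sampling intention depends only on L
    (hS : ∀ (x : X) (l : L) (y : Y) (s : Y),
      0 < (∑ s' : Y, p (x, l, y, s')) →
      p (x, l, y, s) / (∑ s' : Y, p (x, l, y, s')) =
        (∑ x' : X, ∑ y' : Y, p (x', l, y', s)) /
          (∑ x' : X, ∑ y' : Y, ∑ s' : Y, p (x', l, y', s'))) :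
    ∀ (x : X) (l : L) (y : Y),
      0 < (∑ y' : Y, p (x, l, y', y')) →                  -- P(X=x,L=l,S=Y)>0
      0 < (∑ x' : X, ∑ y' : Y, p (x', l, y', y')) →       -- P(L=l,S=Y)>0
      0 < (∑ y' : Y, ∑ s' : Y, p (x, l, y', s')) →        -- P(X=x,L=l)>0
      0 < (∑ s' : Y, p (x, l, y, s')) →                   -- P(X=x,L=l,Y=y)>0
      0 < (∑ x' : X, ∑ y' : Y, ∑ s' : Y, p (x', l, y', s')) →  -- P(L=l)>0
      0 < (∑ x' : X, ∑ l' : L, ∑ s' : Y, p (x', l', y, s')) →  -- P(Y=y)>0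
      p (x, l, y, y) / (∑ y' : Y, p (x, l, y', y')) =
        (((∑ x' : X, p (x', l, y, y)) /
              (∑ x' : X, ∑ y' : Y, p (x', l, y', y'))) *
            ((∑ s' : Y, p (x, l, y, s')) /
              (∑ y' : Y, ∑ s' : Y, p (x, l, y', s'))) /
            (∑ x' : X, ∑ l' : L, ∑ s' : Y, p (x', l', y, s'))) *
          ((∑ y' : Y, ∑ s' : Y, p (x, l, y', s')) *
              (∑ x' : X, ∑ y' : Y, p (x', l, y', y')) /
            ((∑ y' : Y, p (x, l, y', y')) *
              (∑ x' : X, ∑ y' : Y, ∑ s' : Y, p (x', l, y', s')))) := by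

  intro x l y hA hC hE hD hG hF
  have hGne : (∑ x' : X, ∑ y' : Y, ∑ s' : Y, p (x', l, y', s')) ≠ 0 := ne_of_gt hG
  -- a * G = D * M
  have ha : p (x, l, y, y) * (∑ x' : X, ∑ y' : Y, ∑ s' : Y, p (x', l, y', s')) =
      (∑ s' : Y, p (x, l, y, s')) * (∑ x' : X, ∑ y' : Y, p (x', l, y', y)) := by
    have h := hS x l y y hD
    rw [div_eq_div_iff (ne_of_gt hD) hGne] at h
    linarith
  -- B * G = N * M, termwise
  have hB : (∑ x' : X, p (x', l, y, y)) * (∑ x' : X, ∑ y' : Y, ∑ s' : Y, p (x', l, y', s')) =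
      (∑ x' : X, ∑ s' : Y, p (x', l, y, s')) * (∑ x' : X, ∑ y' : Y, p (x', l, y', y)) := by
    rw [Finset.sum_mul, Finset.sum_mul]
    refine Finset.sum_congr rfl fun x' _ => ?_
    rcases lt_or_eq_of_le (Finset.sum_nonneg fun s' _ => hp (x', l, y, s')) with hpos | hzero
    · have h := hS x' l y y hpos
      rw [div_eq_div_iff (ne_of_gt hpos) hGne] at h
      linarith
    · have hall : ∀ s' ∈ Finset.univ, p (x', l, y, s') = 0 := by
        intro s' _
        have := (Finset.sum_eq_zero_iff_of_nonneg (fun s' _ => hp (x', l, y, s'))).mp hzero.symm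
        exact this s' (Finset.mem_univ s')
      rw [hall y (Finset.mem_univ y), Finset.sum_eq_zero hall]
      ring
  -- N = F * G
  have hN : (∑ x' : X, ∑ s' : Y, p (x', l, y, s')) =
      (∑ x' : X, ∑ l' : L, ∑ s' : Y, p (x', l', y, s')) *
        (∑ x' : X, ∑ y' : Y, ∑ s' : Y, p (x', l, y', s')) := by
    have h := hYL y l hG
    field_simp at h
    linarith
  rw [hN] at hB
  set a := p (x, l, y, y) with hadef
  set A := ∑ y' : Y, p (x, l, y', y') with hAdef
  set B := ∑ x' : X, p (x', l, y, y) with hBdef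
  set C := ∑ x' : X, ∑ y' : Y, p (x', l, y', y') with hCdef
  set D := ∑ s' : Y, p (x, l, y, s') with hDdef
  set E := ∑ y' : Y, ∑ s' : Y, p (x, l, y', s') with hEdef
  set F := ∑ x' : X, ∑ l' : L, ∑ s' : Y, p (x', l', y, s') with hFdef
  set G := ∑ x' : X, ∑ y' : Y, ∑ s' : Y, p (x', l, y', s') with hGdef
  set M := ∑ x' : X, ∑ y' : Y, p (x', l, y', y) with hMdef
  have hB2 : B = F * M := by
    have : B * G = (F * M) * G := by linarith [hB]
    exact mul_right_cancel₀ hGne this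
  field_simp
  linear_combination F * ha - D * hB2
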